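/- arXiv:1304.6825 — 3 statements merged into one kernel-verified Lean document; each statement's English description precedes it below -/
import Mathlib

section
/- Assume S ≠ 0 and let ω ∈ ℝ. The weighted Jacobi relaxation operator S_h^J, defined on functions u : ℤ → ℂ by S_h^J u = u − ω·(h/(2S))·(A_h^C u), satisfies for every θ ∈ ℝ: S_h^J φ_θ = S̃_h^J(θ) · φ_θ, where the smoother symbol is S̃_h^J(θ) = 1 − (ω/S)(iγ·cos(2θ) + R·cos(θ) + S). -/
/-- The Fourier mode `φ_θ : ℤ → ℂ`, `φ_θ(j) = exp(iθj)`. -/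
noncomputable def fourierMode (θ : ℝ) : ℤ → ℂ := fun j => Complex.exp (Complex.I * θ * j)

/-- The weighted Jacobi relaxation `S_h^J u = u − ω (h/(2S)) A_h^C u` for the CIP-P1
operator satisfies `S_h^J φ_θ = S̃_h^J(θ) φ_θ` with smoother symbol
`S̃_h^J(θ) = 1 − (ω/S)(iγ cos 2θ + R cos θ + S)`. -/
theorem jacobi_smoother_symbol (h κ : ℝ) (hh : 0 < h) (hκ : 0 < κ)
    (t : ℝ) (ht : t = κ * h) (γ R S : ℂ)
    (hR : R = -1 - 4 * Complex.I * γ - (t : ℂ) ^ 2 / 6)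
    (hS : S = 1 + 3 * Complex.I * γ - (t : ℂ) ^ 2 / 3)
    (hS0 : S ≠ 0) (ω : ℝ) (θ : ℝ) (j : ℤ) :
    fourierMode θ j - (ω : ℂ) * ((h : ℂ) / (2 * S)) *
      ((1 / (h : ℂ)) * (Complex.I * γ * fourierMode θ (j - 2) + R * fourierMode θ (j - 1)
        + 2 * S * fourierMode θ j + R * fourierMode θ (j + 1)
        + Complex.I * γ * fourierMode θ (j + 2)))
      = (1 - (ω : ℂ) / S * (Complex.I * γ * Complex.cos (2 * θ)
          + R * Complex.cos θ + S)) * fourierMode θ j := by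
  have hexp : ∀ k : ℤ, fourierMode θ (j + k)
      = fourierMode θ j * Complex.exp (Complex.I * θ * k) := by
    intro k
    simp only [fourierMode]
    rw [← Complex.exp_add]
    push_cast
    ring_nf
  have h1 : fourierMode θ (j - 2) = fourierMode θ j * Complex.exp (Complex.I * θ * (-2)) := by
    have := hexp (-2); rw [sub_eq_add_neg]; simpa using this
  have h2 : fourierMode θ (j - 1) = fourierMode θ j * Complex.exp (Complex.I * θ * (-1)) := by
    have := hexp (-1); rw [sub_eq_add_neg]; simpa using this
  have h3 : fourierMode θ (j + 1) = fourierMode θ j * Complex.exp (Complex.I * θ * 1) := by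
    simpa using hexp 1
  have h4 : fourierMode θ (j + 2) = fourierMode θ j * Complex.exp (Complex.I * θ * 2) := by
    simpa using hexp 2
  have hc1 : (Complex.cos θ : ℂ) = (Complex.exp (Complex.I * θ * 1) + Complex.exp (Complex.I * θ * (-1))) / 2 := by
    rw [Complex.cos]
    ring_nf
  have hc2 : Complex.cos (2 * θ) = (Complex.exp (Complex.I * θ * 2) + Complex.exp (Complex.I * θ * (-2))) / 2 := by
    rw [Complex.cos]
    ring_nf
  rw [h1, h2, h3, h4, hc1, hc2]
  have hh0 : (h : ℂ) ≠ 0 := by exact_mod_cast hh.ne'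
  field_simp
  ring
end

section
/- Let θ⁰ ∈ (−π/2, π/2] with complementary high frequency θ¹, and let ψ : ℤ → ℂ be the coarse-grid mode ψ(j) = exp(i·(2θ⁰)·j). Then the linear prolongation satisfies I_{2h}^h ψ = (1/2)(1 + cos θ⁰)·φ_{θ⁰} + (1/2)(1 + cos θ¹)·φ_{θ¹}; that is, prolongation of a coarse mode produces the pair of 2h-harmonics with coefficients given by the prolongation symbol Ĩ_{2h}^h(θ) = (1/2)(1 + cos θ). -/
lemma exp_pi_I_int (n : ℤ) :
    Complex.exp (Complex.I * Real.pi * (n : ℂ)) = (-1 : ℂ) ^ n := by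
  rw [show Complex.I * (Real.pi : ℂ) * (n : ℂ) = (n : ℂ) * (Real.pi * Complex.I) by ring,
    Complex.exp_int_mul, Complex.exp_pi_mul_I]

lemma neg_one_zpow_inv (j : ℤ) : ((-1 : ℂ) ^ j)⁻¹ = (-1 : ℂ) ^ j :=
  inv_eq_of_mul_eq_one_right (by
    rw [← zpow_add₀ (by norm_num : (-1 : ℂ) ≠ 0), ← two_mul, zpow_mul]; norm_num)

/-- Linear prolongation of the coarse-grid mode `ψ(j) = exp(i(2θ⁰)j)` produces the pair of
`2h`-harmonics with coefficients given by the prolongation symbol `(1/2)(1 + cos θ)`: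
`I_{2h}^h ψ = (1/2)(1 + cos θ⁰) φ_{θ⁰} + (1/2)(1 + cos θ¹) φ_{θ¹}`. -/
theorem prolongation_of_coarse_mode (θ0 θ1 : ℝ)
    (hθ0 : θ0 ∈ Set.Ioc (-(Real.pi / 2)) (Real.pi / 2))
    (hθ1 : θ1 = if 0 < θ0 then θ0 - Real.pi else θ0 + Real.pi)
    (P : (ℤ → ℂ) → (ℤ → ℂ))
    (hP : ∀ (v : ℤ → ℂ) (j : ℤ),
      P v (2 * j) = v j ∧ P v (2 * j + 1) = (v j + v (j + 1)) / 2)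
    (ψ : ℤ → ℂ) (hψ : ψ = fun j : ℤ => Complex.exp (Complex.I * (2 * θ0) * (j : ℂ))) :
    ∀ j : ℤ, P ψ j = (1 / 2 : ℂ) * (1 + Complex.cos θ0) * fourierMode θ0 j
        + (1 / 2 : ℂ) * (1 + Complex.cos θ1) * fourierMode θ1 j := by
  -- key facts about θ1
  have hcos : (Complex.cos θ1 : ℂ) = -Complex.cos θ0 := by
    rw [hθ1]; split_ifs <;> push_cast <;>
      simp [Complex.cos_sub, Complex.cos_add]
  have hmode : ∀ j : ℤ, fourierMode θ1 j = (-1 : ℂ) ^ j * fourierMode θ0 j := by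
    intro j
    unfold fourierMode
    rw [hθ1]
    split_ifs with h
    · push_cast
      rw [show Complex.I * ((θ0 : ℂ) - Real.pi) * (j : ℂ) =
        -(Complex.I * Real.pi * (j : ℂ)) + Complex.I * θ0 * j by ring,
        Complex.exp_add, Complex.exp_neg, exp_pi_I_int, neg_one_zpow_inv]
    · push_cast
      rw [show Complex.I * ((θ0 : ℂ) + Real.pi) * (j : ℂ) =
        Complex.I * Real.pi * (j : ℂ) + Complex.I * θ0 * j by ring,
        Complex.exp_add, exp_pi_I_int]
  intro j
  rcases Int.even_or_odd j with ⟨k, hk⟩ | ⟨k, hk⟩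
  · have hj : j = 2 * k := by omega
    subst hj
    rw [(hP ψ k).1, hψ, hmode, hcos]
    have : ((-1 : ℂ)) ^ (2 * k) = 1 := by
      rw [zpow_mul]; norm_num
    rw [this]
    unfold fourierMode
    push_cast
    rw [show Complex.I * (θ0 : ℂ) * (2 * k) = Complex.I * (2 * θ0) * k by ring]
    ring
  · have hj : j = 2 * k + 1 := by omega
    subst hj
    rw [(hP ψ k).2, hψ, hmode, hcos]
    have : ((-1 : ℂ)) ^ (2 * k + 1) = -1 := by
      rw [zpow_add₀ (by norm_num), zpow_mul]; norm_num
    rw [this]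
    simp only
    unfold fourierMode
    have hc : (Complex.cos θ0 : ℂ) =
        (Complex.exp ((θ0 : ℂ) * Complex.I) + Complex.exp (-(θ0 : ℂ) * Complex.I)) / 2 := rfl
    push_cast
    rw [hc]
    rw [show Complex.I * (2 * (θ0 : ℂ)) * ((k : ℂ) + 1) =
      (θ0 : ℂ) * Complex.I + Complex.I * θ0 * (2 * k + 1) by ring,
      show Complex.I * (2 * (θ0 : ℂ)) * (k : ℂ) =
      -(θ0 : ℂ) * Complex.I + Complex.I * θ0 * (2 * k + 1) by ring,
      Complex.exp_add, Complex.exp_add]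
    ring
end

section
/- Consider the multilevel iteration (one sweep of the V-cycle with pre- and post-corrections on every level): given v₀ ∈ V and F = A_L u for some u ∈ V, define v_{l+1} = v_l + μ_l · ι_l(R_l(Q_l(F − A_L v_l))) for l = 0, 1, …, L, and then v_{2L+2−l} = v_{2L+1−l} + μ_l · ι_l(S_l(Q_l(F − A_L v_{2L+1−l}))) for l = L, L−1, …, 0. Then the error of the full sweep is propagated by the product operator: v_{2L+2} − u = (I − T̂_0)(I − T̂_1)⋯(I − T̂_L) · (I − T_L)⋯(I − T_1)(I − T_0) · (v_0 − u), where T_l := μ_l · ι_l ∘ R_l ∘ A_l ∘ P_l and T̂_l := μ_l · ι_l ∘ S_l ∘ A_l ∘ P_l are linear operators on V and I is the identity on V. -/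
/-- One sweep of the multilevel V-cycle with pre-corrections on levels `0,…,L` and
post-corrections on levels `L,…,0`: the error is propagated by the product operator
`(I − T̂_0)(I − T̂_1)⋯(I − T̂_L)(I − T_L)⋯(I − T_1)(I − T_0)`, where
`T_l = μ_l ι_l ∘ R_l ∘ A_l ∘ P_l` and `T̂_l = μ_l ι_l ∘ S_l ∘ A_l ∘ P_l`. -/
theorem multilevel_error_propagation {V : Type*} [NormedAddCommGroup V]
    [InnerProductSpace ℂ V] [FiniteDimensional ℂ V]
    (L : ℕ) (Vl : Fin (L + 1) → Submodule ℂ V)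
    (hmono : Monotone Vl) (htop : Vl (Fin.last L) = ⊤)
    (a : ∀ l : Fin (L + 1), Vl l → Vl l → ℂ) (aL : V → V → ℂ)
    (A : ∀ l : Fin (L + 1), Vl l →ₗ[ℂ] Vl l) (AL : V →ₗ[ℂ] V)
    (Q P : ∀ l : Fin (L + 1), V →ₗ[ℂ] Vl l)
    (R S : ∀ l : Fin (L + 1), Vl l →ₗ[ℂ] Vl l)
    (μ : Fin (L + 1) → ℂ)
    (hA : ∀ (l : Fin (L + 1)) (x y : Vl l), (inner ℂ ((A l) x) y : ℂ) = a l x y)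
    (hAL : ∀ x y : V, (inner ℂ (AL x) y : ℂ) = aL x y)
    (hQ : ∀ (l : Fin (L + 1)) (x : V) (y : Vl l),
      (inner ℂ (((Q l) x : Vl l) : V) (y : V) : ℂ) = inner ℂ x (y : V))
    (hP : ∀ (l : Fin (L + 1)) (x : V) (y : Vl l), a l ((P l) x) y = aL x y)
    (u F : V) (hF : AL u = F)
    (v : ℕ → V)
    (hpre : ∀ l : Fin (L + 1), v ((l : ℕ) + 1)
      = v (l : ℕ) + μ l • ((Vl l).subtype ((R l) ((Q l) (F - AL (v (l : ℕ)))))))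
    (hpost : ∀ l : Fin (L + 1), v (2 * L + 2 - (l : ℕ))
      = v (2 * L + 1 - (l : ℕ))
        + μ l • ((Vl l).subtype ((S l) ((Q l) (F - AL (v (2 * L + 1 - (l : ℕ))))))))
    (T Th : Fin (L + 1) → Module.End ℂ V)
    (hT : ∀ l : Fin (L + 1), T l = μ l • ((Vl l).subtype ∘ₗ (R l) ∘ₗ (A l) ∘ₗ (P l)))
    (hTh : ∀ l : Fin (L + 1), Th l = μ l • ((Vl l).subtype ∘ₗ (S l) ∘ₗ (A l) ∘ₗ (P l))) :
    v (2 * L + 2) - u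
      = ((List.ofFn (fun l : Fin (L + 1) => (1 : Module.End ℂ V) - Th l)).prod
          * (List.ofFn (fun l : Fin (L + 1) => (1 : Module.End ℂ V) - T l)).reverse.prod)
          (v 0 - u) := by
  -- key identity: Q l ∘ AL = A l ∘ P l
  have hQA : ∀ (l : Fin (L + 1)) (x : V), (Q l) (AL x) = (A l) ((P l) x) := by
    intro l x
    apply ext_inner_right ℂ
    intro y
    rw [Submodule.coe_inner] at *
    calc (inner ℂ (((Q l) (AL x) : Vl l) : V) (y : V) : ℂ)
        = inner ℂ (AL x) (y : V) := hQ l (AL x) y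
      _ = aL x y := hAL x y
      _ = a l ((P l) x) y := (hP l x y).symm
      _ = inner ℂ ((A l) ((P l) x)) y := (hA l _ y).symm
  set G := List.ofFn (fun l : Fin (L + 1) => (1 : Module.End ℂ V) - T l) with hG
  set H := List.ofFn (fun l : Fin (L + 1) => (1 : Module.End ℂ V) - Th l) with hH
  have hGlen : G.length = L + 1 := by simp [hG]
  have hHlen : H.length = L + 1 := by simp [hH]
  have hres : ∀ n : ℕ, F - AL (v n) = -(AL (v n - u)) := by
    intro n
    rw [← hF, map_sub]
    abel
  -- pre-smoothing steps
  have hstepp : ∀ l : Fin (L + 1),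
      v ((l : ℕ) + 1) - u = ((1 : Module.End ℂ V) - T l) (v (l : ℕ) - u) := by
    intro l
    rw [hpre l, hres, map_neg, hQA, map_neg, map_neg, smul_neg]
    rw [hT l]
    simp only [LinearMap.sub_apply, Module.End.one_apply, LinearMap.smul_apply,
      LinearMap.comp_apply]
    abel
  have hpreprod : ∀ k : ℕ, k ≤ L + 1 → v k - u = ((G.take k).reverse.prod) (v 0 - u) := by
    intro k hk
    induction k with
    | zero => simp
    | succ n ih =>
      have hn : n < L + 1 := hk
      have hGn : G[n]'(by omega) = (1 : Module.End ℂ V) - T ⟨n, hn⟩ := by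
        simp only [hG, List.getElem_ofFn]
      have htake : G.take (n + 1) = G.take n ++ [G[n]'(by omega)] := by
        rw [List.take_concat_get']
      rw [htake, List.reverse_append, List.reverse_singleton, List.singleton_append,
        List.prod_cons, hGn]
      have : v (n + 1) - u = ((1 : Module.End ℂ V) - T ⟨n, hn⟩) (v n - u) := hstepp ⟨n, hn⟩
      rw [this, ih (by omega), Module.End.mul_apply]
  have hmid : v (L + 1) - u = (G.reverse.prod) (v 0 - u) := by
    have := hpreprod (L + 1) le_rfl
    rwa [List.take_of_length_le (by omega)] at this
  -- post-smoothing steps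
  have hsteps : ∀ l : Fin (L + 1),
      v (2 * L + 2 - (l : ℕ)) - u
        = ((1 : Module.End ℂ V) - Th l) (v (2 * L + 1 - (l : ℕ)) - u) := by
    intro l
    rw [hpost l, hres, map_neg, hQA, map_neg, map_neg, smul_neg]
    rw [hTh l]
    simp only [LinearMap.sub_apply, Module.End.one_apply, LinearMap.smul_apply,
      LinearMap.comp_apply]
    abel
  have hpostprod : ∀ k : ℕ, k ≤ L + 1 →
      v (L + 1 + k) - u = ((H.drop (L + 1 - k)).prod) (v (L + 1) - u) := by
    intro k hk
    induction k with
    | zero => simp [List.drop_of_length_le (le_of_eq hHlen)]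
    | succ n ih =>
      have hn : L - n < L + 1 := by omega
      have hl : ((⟨L - n, hn⟩ : Fin (L + 1)) : ℕ) = L - n := rfl
      have h1 : 2 * L + 2 - (L - n) = L + 1 + (n + 1) := by omega
      have h2 : 2 * L + 1 - (L - n) = L + 1 + n := by omega
      have hstep := hsteps ⟨L - n, hn⟩
      rw [hl, h1, h2] at hstep
      have hdropeq : H.drop (L + 1 - (n + 1))
          = (H[L - n]'(by omega)) :: H.drop (L + 1 - n) := by
        have h3 : L + 1 - (n + 1) = L - n := by omega
        have h4 : (L - n) + 1 = L + 1 - n := by omega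
        rw [h3, List.drop_eq_getElem_cons (by omega)]
        congr 1
        rw [h4]
      have hHn : H[L - n]'(by omega) = (1 : Module.End ℂ V) - Th ⟨L - n, hn⟩ := by
        simp only [hH, List.getElem_ofFn]
      rw [hdropeq, List.prod_cons, hHn, hstep, ih (by omega), Module.End.mul_apply]
  have hfin := hpostprod (L + 1) le_rfl
  rw [Nat.sub_self, List.drop_zero] at hfin
  have h2L : 2 * L + 2 = L + 1 + (L + 1) := by omega
  rw [h2L, hfin, hmid, Module.End.mul_apply]
end
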